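/- For a closed set A ⊆ ℝ^d and r > 0, the r-convex hull satisfies C_r(A) = (A ⊕ rB) ⊖ rB, where B is the open unit ball; i.e., the intersection of complements of all open balls of radius r missing A equals the morphological closing of A by rB. -/
import Mathlib


open Set Metric

/-- Minkowski sum. -/
def mSum {d : ℕ} (C D : Set (EuclideanSpace ℝ (Fin d))) : Set (EuclideanSpace ℝ (Fin d)) :=
  Set.image2 (· + ·) C D

/-- Minkowski erosion. -/
def mErode {d : ℕ} (A C : Set (EuclideanSpace ℝ (Fin d))) : Set (EuclideanSpace ℝ (Fin d)) :=
  {x | ∀ c ∈ C, x + c ∈ A}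

/-- The `r`-convex hull: intersection of the complements of all open balls of radius `r`
that do not meet `A`. -/
def rHull {d : ℕ} (r : ℝ) (A : Set (EuclideanSpace ℝ (Fin d))) :
    Set (EuclideanSpace ℝ (Fin d)) :=
  ⋂ (x : EuclideanSpace ℝ (Fin d)) (_ : ball x r ∩ A = ∅), (ball x r)ᶜ

theorem rHull_eq_closing {d : ℕ} (r : ℝ) (hr : 0 < r)
    (A : Set (EuclideanSpace ℝ (Fin d))) (hA : IsClosed A) :
    rHull r A = mErode (mSum A (ball (0 : EuclideanSpace ℝ (Fin d)) r))
      (ball (0 : EuclideanSpace ℝ (Fin d)) r) := by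
  ext x
  simp only [rHull, mErode, mSum, mem_iInter, mem_compl_iff, mem_ball, mem_setOf_eq,
    Set.mem_image2, dist_zero_right]
  constructor
  · intro h c hc
    have hball : (ball (x + c) r ∩ A).Nonempty := by
      rw [nonempty_iff_ne_empty]
      intro hball
      exact h (x + c) hball (by rw [dist_self_add_right]; exact hc)
    obtain ⟨a, hda, ha⟩ := hball
    rw [mem_ball] at hda
    refine ⟨a, ha, x + c - a, ?_, by abel⟩
    rw [show x + c - a = -(a - (x + c)) by abel, norm_neg, ← dist_eq_norm]
    exact hda
  · intro h y hy
    intro hd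
    have hc : ‖y - x‖ < r := by
      rw [← dist_eq_norm, dist_comm]
      exact hd
    obtain ⟨a, ha, b, hb, hab⟩ := h (y - x) hc
    have hya : a ∈ ball y r ∩ A := by
      constructor
      · rw [mem_ball, dist_comm, dist_eq_norm]
        have hab' : a + b = y := by rw [hab]; abel
        have : y - a = b := by rw [← hab']; abel
        rwa [this]
      · exact ha
    rw [hy] at hya
    exact hya
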